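/- For q = 2 and r ≥ 2, any non-horizontal line y = αx + β (α ≠ 0) over F_{2^r} intersects the norm-trace curve X_{2,r} in 2^{r−1} − 1 affine F_{2^r}-points if Tr(β) ≠ 0, and in 2^{r−1} + 1 affine F_{2^r}-points if Tr(β) = 0. -/

import Mathlib

set_option linter.unusedSectionVars false
set_option linter.unusedVariables false

open Finset Polynomial

section NormTraceAux
variable {F : Type*} [Field F] [Fintype F] [DecidableEq F]

private def NTTr (r : ℕ) (z : F) : F := ∑ i ∈ Finset.range r, z ^ 2 ^ i

private lemma nt_char_two (r : ℕ) (hr : 1 ≤ r) (hcard : Fintype.card F = 2 ^ r) :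
    CharP F 2 := by
  obtain ⟨n, hp, hc⟩ := FiniteField.card F (ringChar F)
  have h2 : ringChar F = 2 := by
    have hdvd : ringChar F ∣ 2 ^ r := by
      rw [← hcard, hc]; exact dvd_pow_self _ (by positivity)
    have h := hp.dvd_of_dvd_pow hdvd
    have h1 := Nat.le_of_dvd (by norm_num) h
    have := hp.two_le
    omega
  have := ringChar.charP F
  rwa [h2] at this

private lemma nt_tr_zero (r : ℕ) : NTTr r (0 : F) = 0 := by
  simp [NTTr]

private lemma nt_tr_add [CharP F 2] (r : ℕ) (a b : F) :
    NTTr r (a + b) = NTTr r a + NTTr r b := by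
  haveI : Fact (Nat.Prime 2) := ⟨Nat.prime_two⟩
  simp only [NTTr, add_pow_char_pow]
  rw [Finset.sum_add_distrib]

private lemma nt_tr_sq [CharP F 2] (r : ℕ) (hr : 1 ≤ r) (hcard : Fintype.card F = 2 ^ r)
    (z : F) : NTTr r z ^ 2 = NTTr r z := by
  haveI : Fact (Nat.Prime 2) := ⟨Nat.prime_two⟩
  have hfz : NTTr r z ^ 2 = ∑ i ∈ Finset.range r, z ^ 2 ^ (i + 1) := by
    rw [NTTr, sum_pow_char]
    simp only [← pow_mul, ← pow_succ]
  have hshift := (Finset.sum_range_succ' (fun i => z ^ 2 ^ i) r).symm.trans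
    (Finset.sum_range_succ (fun i => z ^ 2 ^ i) r)
  have hz : z ^ 2 ^ r = z := by rw [← hcard]; exact FiniteField.pow_card z
  have key : NTTr r z ^ 2 + z = NTTr r z + z := by
    rw [hfz]
    simpa [NTTr, hz] using hshift
  exact add_right_cancel key

private lemma nt_tr_mem [CharP F 2] (r : ℕ) (hr : 1 ≤ r) (hcard : Fintype.card F = 2 ^ r)
    (z : F) : NTTr r z = 0 ∨ NTTr r z = 1 := by
  have h := nt_tr_sq r hr hcard z
  have h2 : NTTr r z * (NTTr r z - 1) = 0 := by linear_combination h
  rcases mul_eq_zero.mp h2 with h | h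
  · exact Or.inl h
  · exact Or.inr (sub_eq_zero.mp h)

private lemma nt_exists_tr_one [CharP F 2] (r : ℕ) (hr : 1 ≤ r)
    (hcard : Fintype.card F = 2 ^ r) : ∃ z : F, NTTr r z = 1 := by
  by_contra hno
  push_neg at hno
  have hzero : ∀ z : F, NTTr r z = 0 := fun z =>
    (nt_tr_mem r hr hcard z).resolve_right (hno z)
  set P : F[X] := ∑ i ∈ Finset.range r, X ^ 2 ^ i with hP
  have heval : ∀ z : F, P.eval z = 0 := by
    intro z
    have : P.eval z = NTTr r z := by simp [hP, NTTr, eval_finset_sum]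
    rw [this]; exact hzero z
  have hdeg : P.natDegree ≤ 2 ^ (r - 1) := by
    refine Polynomial.natDegree_sum_le_of_forall_le _ _ ?_
    intro i hi
    rw [Finset.mem_range] at hi
    simp only [natDegree_X_pow]
    exact Nat.pow_le_pow_right (by norm_num) (by omega)
  have hPzero : P = 0 := by
    apply Polynomial.eq_zero_of_natDegree_lt_card_of_eval_eq_zero P Function.injective_id
      (fun z => heval z)
    calc P.natDegree ≤ 2 ^ (r - 1) := hdeg
      _ < 2 ^ r := Nat.pow_lt_pow_right (by norm_num) (by omega)
      _ = Fintype.card F := hcard.symm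
  have hc1 : P.coeff 1 = 1 := by
    simp only [hP, finset_sum_coeff, coeff_X_pow]
    have hcond : ∀ i : ℕ, ((1 : ℕ) = 2 ^ i) ↔ i = 0 := by
      intro i
      constructor
      · intro h; by_contra hi
        have := Nat.one_lt_two_pow_iff.mpr hi
        omega
      · rintro rfl; norm_num
    rw [Finset.sum_congr rfl (fun i _ => by rw [if_congr (hcond i) rfl rfl])]
    rw [Finset.sum_ite_eq' (Finset.range r) 0 (fun _ => (1:F))]
    rw [if_pos (Finset.mem_range.mpr (by omega))]
  rw [hPzero] at hc1
  simp at hc1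

private lemma nt_card_fibers [CharP F 2] (r : ℕ) (hr : 1 ≤ r)
    (hcard : Fintype.card F = 2 ^ r) :
    (Finset.univ.filter fun z : F => NTTr r z = 0).card = 2 ^ (r - 1) ∧
    (Finset.univ.filter fun z : F => NTTr r z = 1).card = 2 ^ (r - 1) := by
  obtain ⟨z₁, hz₁⟩ := nt_exists_tr_one r hr hcard
  set f0 := Finset.univ.filter fun z : F => NTTr r z = 0 with hf0
  set f1 := Finset.univ.filter fun z : F => NTTr r z = 1 with hf1
  have hsum11 : (1 : F) + 1 = 0 := by
    have := CharP.cast_eq_zero F 2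
    rwa [show ((2:ℕ):F) = 1 + 1 by norm_num] at this
  have hbij : f0.card = f1.card := by
    apply Finset.card_nbij' (i := fun z => z + z₁) (j := fun z => z + z₁)
    · intro a ha
      simp only [Finset.mem_coe, hf0, Finset.mem_filter] at ha
      simp only [Finset.mem_coe, hf1, Finset.mem_filter]
      refine ⟨Finset.mem_univ _, ?_⟩
      rw [nt_tr_add, ha.2, hz₁, zero_add]
    · intro a ha
      simp only [Finset.mem_coe, hf1, Finset.mem_filter] at ha
      simp only [Finset.mem_coe, hf0, Finset.mem_filter]
      refine ⟨Finset.mem_univ _, ?_⟩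
      rw [nt_tr_add, ha.2, hz₁, hsum11]
    · intro a ha
      simp only [add_assoc]
      rw [CharTwo.add_self_eq_zero z₁, add_zero]
    · intro a ha
      simp only [add_assoc]
      rw [CharTwo.add_self_eq_zero z₁, add_zero]
  have hdisj : Disjoint f0 f1 := by
    rw [Finset.disjoint_left]
    intro a ha ha'
    rw [hf0, Finset.mem_filter] at ha
    rw [hf1, Finset.mem_filter] at ha'
    exact zero_ne_one (ha.2.symm.trans ha'.2)
  have hunion : f0 ∪ f1 = Finset.univ := by
    ext z
    simp only [hf0, hf1, Finset.mem_union, Finset.mem_filter, Finset.mem_univ, true_and,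
      iff_true]
    exact nt_tr_mem r hr hcard z
  have hcards : f0.card + f1.card = 2 ^ r := by
    rw [← Finset.card_union_of_disjoint hdisj, hunion, Finset.card_univ, hcard]
  have hpow : 2 ^ r = 2 * 2 ^ (r - 1) := by
    conv_lhs => rw [show r = (r - 1) + 1 by omega]
    ring
  constructor <;> omega

end NormTraceAux

/-- For `q = 2`, `r ≥ 2`, a line `y = αx + β` with `α ≠ 0` over `F_{2^r}`
meets the norm-trace curve `X_{2,r} : ∑_{i<r} y^(2^i) = x^(2^r - 1)` in `2^(r-1) - 1`
affine points if `Tr(β) ≠ 0`, and in `2^(r-1) + 1` affine points if `Tr(β) = 0`. -/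
theorem binary_norm_trace_intersection {F : Type*} [Field F] [Fintype F] [DecidableEq F]
    (r : ℕ) (hr : 2 ≤ r) (hcard : Fintype.card F = 2 ^ r) (α β : F) (hα : α ≠ 0) :
    (((∑ i ∈ Finset.range r, β ^ 2 ^ i) ≠ 0 →
      (Finset.univ.filter
          (fun p : F × F => p.2 = α * p.1 + β ∧
            ∑ i ∈ Finset.range r, p.2 ^ 2 ^ i = p.1 ^ (2 ^ r - 1))).card
        = 2 ^ (r - 1) - 1) ∧
    ((∑ i ∈ Finset.range r, β ^ 2 ^ i) = 0 →
      (Finset.univ.filter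
          (fun p : F × F => p.2 = α * p.1 + β ∧
            ∑ i ∈ Finset.range r, p.2 ^ 2 ^ i = p.1 ^ (2 ^ r - 1))).card
        = 2 ^ (r - 1) + 1)) := by
  have hr1 : 1 ≤ r := by omega
  haveI hchar : CharP F 2 := nt_char_two r hr1 hcard
  have hsum11 : (1 : F) + 1 = 0 := by
    have := CharP.cast_eq_zero F 2
    rwa [show ((2:ℕ):F) = 1 + 1 by norm_num] at this
  obtain ⟨h0card, h1card⟩ := nt_card_fibers (F := F) r hr1 hcard
  -- Step 1: reduce to counting x
  have hstep1 : (Finset.univ.filter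
      (fun p : F × F => p.2 = α * p.1 + β ∧
        ∑ i ∈ Finset.range r, p.2 ^ 2 ^ i = p.1 ^ (2 ^ r - 1))).card
      = (Finset.univ.filter
          (fun x : F => NTTr r (α * x + β) = x ^ (2 ^ r - 1))).card := by
    apply Finset.card_nbij' (i := fun p => p.1) (j := fun x => (x, α * x + β))
    · rintro ⟨x, y⟩ hp
      simp only [Finset.mem_coe, Finset.mem_filter, Finset.mem_univ, true_and] at hp ⊢
      obtain ⟨h1, h2⟩ := hp
      rw [NTTr, ← h1]
      exact h2
    · intro x hx
      simp only [Finset.mem_coe, Finset.mem_filter, Finset.mem_univ, true_and] at hx ⊢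
      exact hx
    · rintro ⟨x, y⟩ hp
      simp only [Finset.mem_coe, Finset.mem_filter, Finset.mem_univ, true_and] at hp
      simp [hp.1]
    · intro x hx
      rfl
  -- basic facts
  have hx1 : ∀ x : F, x ≠ 0 → x ^ (2 ^ r - 1) = 1 := by
    intro x hx
    rw [← hcard]
    exact FiniteField.pow_card_sub_one_eq_one x hx
  have h0pow : (0 : F) ^ (2 ^ r - 1) = 0 := by
    apply zero_pow
    have : 1 < 2 ^ r := Nat.one_lt_two_pow_iff.mpr (by omega)
    omega
  -- split the x-count at x = 0
  have hsplit := Finset.card_filter_add_card_filter_not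
    (s := Finset.univ.filter (fun x : F => NTTr r (α * x + β) = x ^ (2 ^ r - 1)))
    (p := fun x => x = 0)
  rw [Finset.filter_filter, Finset.filter_filter] at hsplit
  -- the nonzero part, via the bijection x ↦ α * x
  have hBcard : (Finset.univ.filter
      (fun x : F => (NTTr r (α * x + β) = x ^ (2 ^ r - 1)) ∧ ¬x = 0)).card
      = (Finset.univ.filter
          (fun z : F => NTTr r z = 1 + NTTr r β ∧ z ≠ 0)).card := by
    apply Finset.card_nbij' (i := fun x => α * x) (j := fun z => α⁻¹ * z)
    · intro x hx
      simp only [Finset.mem_coe, Finset.mem_filter, Finset.mem_univ, true_and] at hx ⊢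
      obtain ⟨h1, h2⟩ := hx
      rw [hx1 x h2, nt_tr_add] at h1
      exact ⟨by linear_combination h1 - NTTr r β * hsum11, mul_ne_zero hα h2⟩
    · intro z hz
      simp only [Finset.mem_coe, Finset.mem_filter, Finset.mem_univ, true_and] at hz ⊢
      obtain ⟨h1, h2⟩ := hz
      have hz0 : α⁻¹ * z ≠ 0 := by
        simp [hα, h2]
      refine ⟨?_, hz0⟩
      rw [hx1 _ hz0, ← mul_assoc, mul_inv_cancel₀ hα, one_mul, nt_tr_add, h1]
      linear_combination NTTr r β * hsum11
    · intro x hx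
      show α⁻¹ * (α * x) = x
      rw [← mul_assoc, inv_mul_cancel₀ hα, one_mul]
    · intro z hz
      show α * (α⁻¹ * z) = z
      rw [← mul_assoc, mul_inv_cancel₀ hα, one_mul]
  constructor
  · -- Tr β ≠ 0, hence Tr β = 1
    intro hβ
    have hβ1 : NTTr r β = 1 := (nt_tr_mem r hr1 hcard β).resolve_left hβ
    -- zero part is empty
    have hA : (Finset.univ.filter
        (fun x : F => (NTTr r (α * x + β) = x ^ (2 ^ r - 1)) ∧ x = 0)) = ∅ := by
      ext x
      simp only [Finset.mem_filter, Finset.mem_univ, true_and, Finset.notMem_empty,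
        iff_false, not_and]
      rintro h rfl
      rw [mul_zero, zero_add, h0pow, hβ1] at h
      exact one_ne_zero h
    -- nonzero part: Tr z = 1 + 1 = 0, z ≠ 0
    have hB2 : (Finset.univ.filter
        (fun z : F => NTTr r z = 1 + NTTr r β ∧ z ≠ 0))
        = (Finset.univ.filter (fun z : F => NTTr r z = 0)).erase 0 := by
      ext z
      simp only [Finset.mem_filter, Finset.mem_univ, true_and, Finset.mem_erase]
      rw [hβ1, hsum11]
      tauto
    have h0mem : (0 : F) ∈ Finset.univ.filter (fun z : F => NTTr r z = 0) := by
      simp [nt_tr_zero]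
    rw [hstep1, ← hsplit, hA, hBcard, hB2, Finset.card_erase_of_mem h0mem, h0card]
    simp
  · -- Tr β = 0
    intro hβ
    have hβ' : NTTr r β = 0 := hβ
    -- zero part is {0}
    have hA : (Finset.univ.filter
        (fun x : F => (NTTr r (α * x + β) = x ^ (2 ^ r - 1)) ∧ x = 0)) = {0} := by
      ext x
      simp only [Finset.mem_filter, Finset.mem_univ, true_and, Finset.mem_singleton]
      constructor
      · exact fun h => h.2
      · rintro rfl
        refine ⟨?_, rfl⟩
        rw [mul_zero, zero_add, h0pow]
        exact hβ
    -- nonzero part: Tr z = 1 (which forces z ≠ 0)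
    have hB2 : (Finset.univ.filter
        (fun z : F => NTTr r z = 1 + NTTr r β ∧ z ≠ 0))
        = Finset.univ.filter (fun z : F => NTTr r z = 1) := by
      ext z
      simp only [Finset.mem_filter, Finset.mem_univ, true_and]
      rw [hβ', add_zero]
      constructor
      · exact fun h => h.1
      · intro h
        refine ⟨h, ?_⟩
        rintro rfl
        rw [nt_tr_zero] at h
        exact zero_ne_one h
    rw [hstep1, ← hsplit, hA, hBcard, hB2, h1card, Finset.card_singleton]
    omega
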